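/- Let m ∈ ℕ, α_1,...,α_m, β_1,...,β_m, γ ∈ ℝ with β_j ≠ 0, l_0,...,l_m > 0, N_1,...,N_m ∈ ℕ positive. Consider the (m+1)×(m+1) matrix H with entries H_{00} = γ l_0⁻¹ + Σ_{j=1}^m α_j N_j l_0⁻¹, H_{0j} = −α_j β_j N_j l_0⁻¹, H_{j0} = −α_j β_j N_j l_j⁻¹, H_{jj} = α_j β_j² N_j l_j⁻¹ for j = 1,...,m, and all other off-diagonal entries zero. Then λ ∉ {A_1,...,A_m} (with A_j := α_j β_j² N_j l_j⁻¹) is an eigenvalue of H if and only if λ is a root of the equation λ(l_0 + Σ_{j=1}^m A_j l_j/(β_j²(A_j − λ))) = γ. -/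

import Mathlib

private lemma key_term (a b n l A lam : ℝ) (hb : b ≠ 0) (hl : l ≠ 0)
    (hA : A = a * b ^ 2 * n / l) (hne : lam ≠ A) :
    a * b * n * ((a * b * n / l) / (A - lam)) - a * n
      = lam * (A * l / (b ^ 2 * (A - lam))) := by
  have hAl : A - lam ≠ 0 := sub_ne_zero.mpr (Ne.symm hne)
  have h1 : a * b * n = A * l / b := by rw [hA]; field_simp
  have h2 : a * n = A * l / b ^ 2 := by rw [hA]; field_simp
  rw [h1, h2]
  field_simp
  ring

/-- characteristic equation for the matrix of the limiting operator `H₀^N`.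
A number `λ ∉ {A₁,…,A_m}` (with `Aⱼ = αⱼ βⱼ² Nⱼ/lⱼ`) is an eigenvalue of the
`(m+1)×(m+1)` matrix `H` described below iff it is a root of
`λ (l₀ + ∑ⱼ Aⱼ lⱼ/(βⱼ²(Aⱼ − λ))) = γ`. -/
theorem matrix_eigenvalue_iff_root
    (m : ℕ) (α β : Fin m → ℝ) (hβ : ∀ j, β j ≠ 0) (γ : ℝ)
    (l0 : ℝ) (hl0 : 0 < l0) (l : Fin m → ℝ) (hl : ∀ j, 0 < l j)
    (N : Fin m → ℕ) (hN : ∀ j, 0 < N j)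
    (A : Fin m → ℝ) (hA : ∀ j, A j = α j * (β j) ^ 2 * (N j : ℝ) / l j)
    (H : Matrix (Fin (m + 1)) (Fin (m + 1)) ℝ)
    (h00 : H 0 0 = (γ + ∑ j, α j * (N j : ℝ)) / l0)
    (h0j : ∀ j : Fin m, H 0 j.succ = -(α j * β j * (N j : ℝ)) / l0)
    (hj0 : ∀ j : Fin m, H j.succ 0 = -(α j * β j * (N j : ℝ)) / l j)
    (hjj : ∀ j : Fin m, H j.succ j.succ = α j * (β j) ^ 2 * (N j : ℝ) / l j)
    (hoff : ∀ j k : Fin m, j ≠ k → H j.succ k.succ = 0) :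
    ∀ lam : ℝ, (∀ j, lam ≠ A j) →
      ((∃ v : Fin (m + 1) → ℝ, v ≠ 0 ∧ H.mulVec v = lam • v) ↔
        lam * (l0 + ∑ j, A j * l j / ((β j) ^ 2 * (A j - lam))) = γ) := by
  intro lam hlam
  have hl0' : l0 ≠ 0 := ne_of_gt hl0
  have hAl : ∀ j, A j - lam ≠ 0 := fun j => sub_ne_zero.mpr (Ne.symm (hlam j))
  set c : Fin m → ℝ := fun j => (α j * β j * (N j : ℝ) / l j) / (A j - lam) with hc
  have hcc : ∀ j, c j * (A j - lam) = α j * β j * (N j : ℝ) / l j := fun j =>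
    div_mul_cancel₀ _ (hAl j)
  have hterm : ∀ j, α j * β j * (N j : ℝ) * c j - α j * (N j : ℝ)
      = lam * (A j * l j / ((β j) ^ 2 * (A j - lam))) := fun j =>
    key_term _ _ _ _ _ _ (hβ j) (ne_of_gt (hl j)) (hA j) (hlam j)
  have hsum : ∑ j, lam * (A j * l j / ((β j) ^ 2 * (A j - lam)))
      = (∑ j, α j * β j * (N j : ℝ) * c j) - ∑ j, α j * (N j : ℝ) := by
    rw [← Finset.sum_sub_distrib]
    exact (Finset.sum_congr rfl fun j _ => (hterm j).symm)
  constructor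
  · rintro ⟨v, hv, hev⟩
    have hrow : ∀ j : Fin m, v j.succ = c j * v 0 := by
      intro j
      have h := congrFun hev j.succ
      simp only [Matrix.mulVec, dotProduct, Fin.sum_univ_succ, Pi.smul_apply,
        smul_eq_mul] at h
      rw [Finset.sum_eq_single j (fun k _ hk => by rw [hoff j k (Ne.symm hk), zero_mul])
        (fun hj => absurd (Finset.mem_univ j) hj), hj0, hjj, ← hA] at h
      have h2 : v j.succ * (A j - lam) = α j * β j * (N j : ℝ) / l j * v 0 := by
        linear_combination h
      have h3 : v j.succ = (α j * β j * (N j : ℝ) / l j * v 0) / (A j - lam) :=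
        (eq_div_iff (hAl j)).mpr h2
      rw [h3]
      simp only [hc]
      ring
    have hv0 : v 0 ≠ 0 := by
      intro h0
      apply hv
      funext i
      refine Fin.cases ?_ (fun j => ?_) i
      · simpa using h0
      · simp [hrow j, h0]
    have h0 := congrFun hev 0
    simp only [Matrix.mulVec, dotProduct, Fin.sum_univ_succ, Pi.smul_apply,
      smul_eq_mul, h00, h0j] at h0
    simp only [hrow] at h0
    have hsum2 : ∑ j, (-(α j * β j * (N j : ℝ)) / l0 * (c j * v 0))
        = (∑ j, α j * β j * (N j : ℝ) * c j) * (-(v 0) / l0) := by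
      rw [Finset.sum_mul]
      exact Finset.sum_congr rfl fun j _ => by ring
    rw [hsum2] at h0
    have key : (γ + ∑ j, α j * (N j : ℝ)
        - ∑ j, α j * β j * (N j : ℝ) * c j) * v 0 = (lam * l0) * v 0 := by
      field_simp at h0
      linear_combination (v 0) * h0
    have key' := mul_right_cancel₀ hv0 key
    rw [mul_add, Finset.mul_sum, hsum]
    linarith
  · intro heq
    refine ⟨Fin.cons 1 c, fun h => by simpa using congrFun h 0, ?_⟩
    funext i
    simp only [Matrix.mulVec, dotProduct, Pi.smul_apply, smul_eq_mul]
    refine Fin.cases ?_ (fun j => ?_) i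
    · rw [Fin.sum_univ_succ]
      simp only [Fin.cons_zero, Fin.cons_succ, mul_one, h00, h0j]
      have hsum3 : ∑ j, (-(α j * β j * (N j : ℝ)) / l0 * c j)
          = (∑ j, α j * β j * (N j : ℝ) * c j) * (-1 / l0) := by
        rw [Finset.sum_mul]
        exact Finset.sum_congr rfl fun j _ => by ring
      rw [hsum3]
      rw [mul_add, Finset.mul_sum, hsum] at heq
      field_simp
      linear_combination -heq
    · rw [Fin.sum_univ_succ]
      simp only [Fin.cons_zero, Fin.cons_succ, mul_one]
      rw [Finset.sum_eq_single j (fun k _ hk => by rw [hoff j k (Ne.symm hk), zero_mul])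
        (fun hj => absurd (Finset.mem_univ j) hj), hj0, hjj, ← hA]
      linear_combination hcc j
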